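/- Fix a real exponent s > 2 and m₁ ∈ (0,1), and define g(θ) = m₁ f_s(θ) + (1−m₁) f_s(θ − π/3). Then g has exactly one zero in each of the open intervals (0, π/3), (π/3, π), (π, 4π/3), and (4π/3, 2π), and g(π) ≠ 0 and g(4π/3) ≠ 0; hence g has exactly four zeros in (0, 2π) \ {π/3}. -/

import Mathlib

open Real Set

/-- `f_s(θ) = sin(θ)·(2^{-s}|sin(θ/2)|^{-s} − 1)`, the coorbital kernel function
for a homogeneous potential with exponent `s`. -/
noncomputable def coorbitalF (s θ : ℝ) : ℝ :=
  Real.sin θ * ((2 : ℝ) ^ (-s) * |Real.sin (θ / 2)| ^ (-s) - 1)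

namespace Coorbital

open Filter Topology



/-- `P s θ = 2^{-s} sin(θ/2)^{-s}`, the (unsigned) potential factor. -/
noncomputable def P (s θ : ℝ) : ℝ := (2 : ℝ) ^ (-s) * (Real.sin (θ / 2)) ^ (-s)

/-- derivative of `P` in `θ`. -/
noncomputable def Pd (s θ : ℝ) : ℝ :=
  (2 : ℝ) ^ (-s) * (Real.cos (θ / 2) / 2 * (-s) * Real.sin (θ / 2) ^ (-s - 1))

/-- formula for the derivative of `coorbitalF`. -/
noncomputable def Fd (s θ : ℝ) : ℝ := Real.cos θ * (P s θ - 1) + Real.sin θ * Pd s θ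

lemma sin_half_pos {θ : ℝ} (h1 : 0 < θ) (h2 : θ < 2 * π) : 0 < Real.sin (θ / 2) :=
  Real.sin_pos_of_pos_of_lt_pi (by linarith) (by linarith)

lemma F_eq {s θ : ℝ} (h : 0 ≤ Real.sin (θ / 2)) :
    coorbitalF s θ = Real.sin θ * (P s θ - 1) := by
  unfold coorbitalF P; rw [abs_of_nonneg h]

lemma P_pos {s θ : ℝ} (h : 0 < Real.sin (θ / 2)) : 0 < P s θ :=
  mul_pos (Real.rpow_pos_of_pos two_pos _) (Real.rpow_pos_of_pos h _)

lemma P_eq {s θ : ℝ} (h : 0 ≤ Real.sin (θ / 2)) :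
    P s θ = (2 * Real.sin (θ / 2)) ^ (-s) := by
  unfold P; rw [Real.mul_rpow (by norm_num) h]

lemma hasDerivAt_P {s θ : ℝ} (h : Real.sin (θ / 2) ≠ 0) :
    HasDerivAt (P s) (Pd s θ) θ := by
  have h1 : HasDerivAt (fun x : ℝ => Real.sin (x / 2)) (Real.cos (θ / 2) / 2) θ := by
    exact ((Real.hasDerivAt_sin (θ / 2)).comp θ ((hasDerivAt_id θ).div_const 2)).congr_deriv (by ring_nf : _ = Real.cos (θ / 2) / 2)
  have h2 := h1.rpow_const (p := -s) (Or.inl h)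
  have h3 := h2.const_mul ((2 : ℝ) ^ (-s))
  unfold Pd
  exact h3

lemma hasDerivAt_F {s θ : ℝ} (h1 : 0 < θ) (h2 : θ < 2 * π) :
    HasDerivAt (coorbitalF s) (Fd s θ) θ := by
  have hpos := sin_half_pos h1 h2
  have hG : HasDerivAt (fun x => Real.sin x * (P s x - 1)) (Fd s θ) θ := by
    have := (Real.hasDerivAt_sin θ).mul ((hasDerivAt_P (s := s) hpos.ne').sub_const 1)
    unfold Fd
    exact this
  apply hG.congr_of_eventuallyEq
  have hopen : IsOpen {x : ℝ | 0 < Real.sin (x / 2)} :=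
    isOpen_lt continuous_const (Real.continuous_sin.comp (continuous_id.div_const 2))
  filter_upwards [hopen.mem_nhds hpos] with x hx
  exact F_eq hx.le

lemma sin_mul_Pd {s θ : ℝ} (h1 : 0 < θ) (h2 : θ < 2 * π) :
    Real.sin θ * Pd s θ = -(s / 2) * (1 + Real.cos θ) * P s θ := by
  have hpos := sin_half_pos h1 h2
  have hsin : Real.sin θ = 2 * Real.sin (θ / 2) * Real.cos (θ / 2) := by
    rw [← Real.sin_two_mul]; ring_nf
  have hcos : Real.cos (θ / 2) ^ 2 = (1 + Real.cos θ) / 2 := by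
    have := Real.cos_sq (θ / 2); rw [this]; ring_nf
  have hrpow : Real.sin (θ / 2) ^ (-s - 1) * Real.sin (θ / 2) = Real.sin (θ / 2) ^ (-s) := by
    rw [← Real.rpow_add_one hpos.ne']; ring_nf
  unfold Pd P
  rw [hsin]
  linear_combination (-s * (2:ℝ)^(-s) * Real.cos (θ/2)^2) * hrpow +
    (-s * (2:ℝ)^(-s) * Real.sin (θ/2)^(-s)) * hcos



lemma pi_pos' : (0:ℝ) < π := Real.pi_pos

/-- monotone sine bound -/
lemma sin_le_sin' {x y : ℝ} (hx : -(π/2) ≤ x) (hxy : x ≤ y) (hy : y ≤ π/2) :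
    Real.sin x ≤ Real.sin y :=
  Real.strictMonoOn_sin.monotoneOn ⟨hx, by linarith⟩ ⟨by linarith, hy⟩ hxy

lemma cos_le_cos' {x y : ℝ} (hx : 0 ≤ x) (hxy : x ≤ y) (hy : y ≤ π) :
    Real.cos y ≤ Real.cos x :=
  Real.strictAntiOn_cos.antitoneOn ⟨hx, by linarith⟩ ⟨by linarith, hy⟩ hxy

lemma sin_lt_sin' {x y : ℝ} (hx : -(π/2) ≤ x) (hxy : x < y) (hy : y ≤ π/2) :
    Real.sin x < Real.sin y :=
  Real.strictMonoOn_sin ⟨hx, by linarith⟩ ⟨by linarith, hy⟩ hxy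

lemma sqrt3_lt_two : Real.sqrt 3 < 2 := by
  nlinarith [Real.sq_sqrt (by norm_num : (3:ℝ) ≥ 0), Real.sqrt_nonneg 3]

lemma one_lt_sqrt3 : 1 < Real.sqrt 3 := by
  nlinarith [Real.sq_sqrt (by norm_num : (3:ℝ) ≥ 0), Real.sqrt_nonneg 3]

/-- B1 : sin θ ≥ √3/2 on [π/3, 2π/3] -/
lemma sin_ge_sqrt3_half {θ : ℝ} (h1 : π/3 ≤ θ) (h2 : θ ≤ 2*π/3) :
    Real.sqrt 3 / 2 ≤ Real.sin θ := by
  rcases le_or_gt θ (π/2) with h | h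
  · rw [← Real.sin_pi_div_three]
    exact sin_le_sin' (by linarith [pi_pos']) h1 h
  · rw [← Real.sin_pi_div_three, ← Real.sin_pi_sub θ]
    exact sin_le_sin' (by linarith [pi_pos']) (by linarith) (by linarith)

/-- sin x ≤ √3/2 on [0, π/3] -/
lemma sin_le_sqrt3_half {x : ℝ} (h1 : 0 ≤ x) (h2 : x ≤ π/3) :
    Real.sin x ≤ Real.sqrt 3 / 2 := by
  rw [← Real.sin_pi_div_three]
  exact sin_le_sin' (by linarith [pi_pos']) h2 (by linarith [pi_pos'])

/-- cos x ≥ 1/2 on [0, π/3] -/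
lemma half_le_cos {x : ℝ} (h1 : 0 ≤ x) (h2 : x ≤ π/3) : 1/2 ≤ Real.cos x := by
  rw [← Real.cos_pi_div_three]
  exact cos_le_cos' h1 h2 (by linarith [pi_pos'])

/-- cos x ≤ -1/2 on [2π/3, π] -/
lemma cos_le_neg_half {x : ℝ} (h1 : 2*π/3 ≤ x) (h2 : x ≤ π) : Real.cos x ≤ -(1/2) := by
  have : Real.cos (2*π/3) = -(1/2) := by
    have := Real.cos_pi_sub (π/3)
    rw [Real.cos_pi_div_three] at this
    rw [show 2*π/3 = π - π/3 by ring, this]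
  rw [← this]
  exact cos_le_cos' (by linarith [pi_pos']) h1 h2

/-- on (0, π/3) : sin(θ/2) < 1/2 -/
lemma sin_half_lt {θ : ℝ} (h1 : 0 < θ) (h2 : θ < π/3) : Real.sin (θ/2) < 1/2 := by
  rw [← Real.sin_pi_div_six]
  exact sin_lt_sin' (by linarith) (by linarith) (by linarith [pi_pos'])

/-- on (π/3, 5π/3) : sin(θ/2) > 1/2 -/
lemma sin_half_gt {θ : ℝ} (h1 : π/3 < θ) (h2 : θ < 5*π/3) : 1/2 < Real.sin (θ/2) := by
  rw [← Real.sin_pi_div_six]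
  rcases le_or_gt (θ/2) (π/2) with h | h
  · exact sin_lt_sin' (by linarith [pi_pos']) (by linarith) h
  · rw [← Real.sin_pi_sub (θ/2)]
    exact sin_lt_sin' (by linarith [pi_pos']) (by linarith) (by linarith)

/-- on (5π/3, 2π): sin(θ/2) < 1/2 -/
lemma sin_half_lt' {θ : ℝ} (h1 : 5*π/3 < θ) (h2 : θ < 2*π) : Real.sin (θ/2) < 1/2 := by
  rw [← Real.sin_pi_div_six, ← Real.sin_pi_sub (θ/2)]
  exact sin_lt_sin' (by linarith [pi_pos']) (by linarith) (by linarith [pi_pos'])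

/-- P > 1 on (0, π/3) -/
lemma one_lt_P {s θ : ℝ} (hs : 0 < s) (h1 : 0 < θ) (h2 : θ < π/3) : 1 < P s θ := by
  have hpos := sin_half_pos h1 (by linarith [pi_pos'])
  rw [P_eq hpos.le, show -s = -s by rfl]
  have hlt : 2 * Real.sin (θ/2) < 1 := by have := sin_half_lt h1 h2; linarith
  rw [Real.one_lt_rpow_iff_of_pos (by linarith)]
  right; exact ⟨hlt, by linarith⟩

/-- P < 1 on (π/3, 5π/3) -/
lemma P_lt_one {s θ : ℝ} (hs : 0 < s) (h1 : π/3 < θ) (h2 : θ < 5*π/3) : P s θ < 1 := by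
  have hpos : (0:ℝ) < Real.sin (θ/2) := by have := sin_half_gt h1 h2; linarith
  rw [P_eq hpos.le]
  have hgt : 1 < 2 * Real.sin (θ/2) := by have := sin_half_gt h1 h2; linarith
  exact Real.rpow_lt_one_of_one_lt_of_neg hgt (by linarith)

/-- P > 1 on (5π/3, 2π) -/
lemma one_lt_P' {s θ : ℝ} (hs : 0 < s) (h1 : 5*π/3 < θ) (h2 : θ < 2*π) : 1 < P s θ := by
  have hpos := sin_half_pos (by linarith [pi_pos']) h2
  rw [P_eq hpos.le]
  have hlt : 2 * Real.sin (θ/2) < 1 := by have := sin_half_lt' h1 h2; linarith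
  rw [Real.one_lt_rpow_iff_of_pos (by linarith)]
  right; exact ⟨hlt, by linarith⟩

lemma sin_pi_six' : Real.sin (π/3/2) = 1/2 := by
  rw [show π/3/2 = π/6 by ring, Real.sin_pi_div_six]

lemma P_pi_div_three (s : ℝ) : P s (π/3) = 1 := by
  rw [P_eq (by rw [sin_pi_six']; norm_num), sin_pi_six']
  norm_num

lemma sin_half_5pi3 : Real.sin (5*π/3/2) = 1/2 := by
  rw [show 5*π/3/2 = π - π/6 by ring, Real.sin_pi_sub, Real.sin_pi_div_six]

lemma P_5pi_div_three (s : ℝ) : P s (5*π/3) = 1 := by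
  rw [P_eq (by rw [sin_half_5pi3]; norm_num), sin_half_5pi3]
  norm_num





lemma sin_pos_on {θ : ℝ} (h1 : 0 < θ) (h2 : θ < π) : 0 < Real.sin θ :=
  Real.sin_pos_of_pos_of_lt_pi h1 h2

lemma sin_neg_on {θ : ℝ} (h1 : π < θ) (h2 : θ < 2*π) : Real.sin θ < 0 := by
  have : Real.sin θ = -Real.sin (θ - π) := by
    have := Real.sin_add_pi (θ - π)
    rw [show θ - π + π = θ by ring] at this
    linarith
  rw [this, neg_lt, neg_zero]
  exact sin_pos_on (by linarith) (by linarith)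

/-- F > 0 on (0, π/3) -/
lemma F_pos1 {s θ : ℝ} (hs : 0 < s) (h1 : 0 < θ) (h2 : θ < π/3) : 0 < coorbitalF s θ := by
  rw [F_eq (sin_half_pos h1 (by linarith [pi_pos'])).le]
  have := one_lt_P hs h1 h2
  have := sin_pos_on h1 (by linarith [pi_pos'])
  nlinarith

/-- F < 0 on (π/3, π) -/
lemma F_neg2 {s θ : ℝ} (hs : 0 < s) (h1 : π/3 < θ) (h2 : θ < π) : coorbitalF s θ < 0 := by
  rw [F_eq (sin_half_pos (by linarith [pi_pos']) (by linarith [pi_pos'])).le]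
  have := P_lt_one hs h1 (by linarith [pi_pos'])
  have := sin_pos_on (by linarith [pi_pos']) h2
  nlinarith

/-- F > 0 on (π, 5π/3) -/
lemma F_pos3 {s θ : ℝ} (hs : 0 < s) (h1 : π < θ) (h2 : θ < 5*π/3) : 0 < coorbitalF s θ := by
  rw [F_eq (sin_half_pos (by linarith [pi_pos']) (by linarith [pi_pos'])).le]
  have := P_lt_one hs (by linarith [pi_pos']) h2
  have := sin_neg_on h1 (by linarith [pi_pos'])
  nlinarith

/-- F < 0 on (5π/3, 2π) -/
lemma F_neg4 {s θ : ℝ} (hs : 0 < s) (h1 : 5*π/3 < θ) (h2 : θ < 2*π) : coorbitalF s θ < 0 := by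
  rw [F_eq (sin_half_pos (by linarith [pi_pos']) h2).le]
  have := one_lt_P' hs h1 h2
  have := sin_neg_on (by linarith [pi_pos']) h2
  nlinarith

lemma F_pi (s : ℝ) : coorbitalF s π = 0 := by unfold coorbitalF; simp

lemma F_pi3 (s : ℝ) : coorbitalF s (π/3) = 0 := by
  rw [F_eq ?h, P_pi_div_three]
  · ring
  case h =>
    rw [show π/3/2 = π/6 by ring, Real.sin_pi_div_six]; norm_num

lemma F_5pi3 (s : ℝ) : coorbitalF s (5*π/3) = 0 := by
  rw [F_eq ?h, P_5pi_div_three]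
  · ring
  case h =>
    rw [show 5*π/3/2 = π - π/6 by ring, Real.sin_pi_sub, Real.sin_pi_div_six]
    norm_num

lemma F_odd (s θ : ℝ) : coorbitalF s (-θ) = -coorbitalF s θ := by
  unfold coorbitalF
  rw [show -θ/2 = -(θ/2) by ring, Real.sin_neg, Real.sin_neg, abs_neg]
  ring

lemma F_zero (s : ℝ) : coorbitalF s 0 = 0 := by unfold coorbitalF; simp

lemma F_periodic (s θ : ℝ) : coorbitalF s (θ + 2*π) = coorbitalF s θ := by
  unfold coorbitalF
  rw [show (θ + 2*π)/2 = θ/2 + π by ring, Real.sin_add_pi, abs_neg,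
    show θ + 2*π = θ + 2*π by rfl]
  rw [Real.sin_add_two_pi]

lemma F_npi3 (s : ℝ) : coorbitalF s (-(π/3)) = 0 := by rw [F_odd, F_pi3]; ring

/-- key exponential bound: for s ≥ 2, √3 ^ s ≥ 3s/2. -/
lemma sqrt3_rpow_ge {s : ℝ} (hs : 2 ≤ s) : 3 * s / 2 ≤ Real.sqrt 3 ^ s := by
  have h3 : (0:ℝ) < Real.sqrt 3 := Real.sqrt_pos.mpr (by norm_num)
  have hlog : (1:ℝ) ≤ Real.log 3 := by
    rw [Real.le_log_iff_exp_le (by norm_num)]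
    have := Real.exp_one_lt_d9
    norm_num at this ⊢
    linarith
  have hsplit : Real.sqrt 3 ^ s = 3 * Real.sqrt 3 ^ (s - 2) := by
    rw [show s = 2 + (s - 2) by ring, Real.rpow_add h3]
    norm_num
  have hexp : 1 + (s - 2) * (1/2) ≤ Real.sqrt 3 ^ (s - 2) := by
    rw [Real.rpow_def_of_pos h3]
    have hls : Real.log (Real.sqrt 3) = Real.log 3 / 2 := Real.log_sqrt (by norm_num)
    calc 1 + (s-2) * (1/2) ≤ 1 + (s-2) * (Real.log 3 / 2) := by nlinarith
      _ ≤ Real.exp (Real.log 3 / 2 * (s-2)) := by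
          have := Real.add_one_le_exp (Real.log 3 / 2 * (s-2)); linarith
      _ = Real.exp (Real.log (Real.sqrt 3) * (s-2)) := by rw [hls]
  rw [hsplit]
  nlinarith

/-- P bound on the middle region: if √3 ≤ 2 sin(θ/2) then P ≤ 1/3 and s*P ≤ 2/3. -/
lemma P_small {s θ : ℝ} (hs : 2 ≤ s) (hb : Real.sqrt 3 ≤ 2 * Real.sin (θ/2)) :
    P s θ ≤ 1/3 ∧ s * P s θ ≤ 2/3 := by
  have h3 : (0:ℝ) < Real.sqrt 3 := Real.sqrt_pos.mpr (by norm_num)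
  have hsin : (0:ℝ) ≤ Real.sin (θ/2) := by nlinarith
  have hP : P s θ ≤ Real.sqrt 3 ^ (-s) := by
    rw [P_eq hsin, Real.rpow_neg (by linarith), Real.rpow_neg h3.le]
    apply inv_anti₀
    · exact Real.rpow_pos_of_pos h3 s
    · exact Real.rpow_le_rpow h3.le hb (by linarith)
  have hge := sqrt3_rpow_ge hs
  have hpow : Real.sqrt 3 ^ (-s) = (Real.sqrt 3 ^ s)⁻¹ := Real.rpow_neg h3.le s
  have hpos : (0:ℝ) < Real.sqrt 3 ^ s := Real.rpow_pos_of_pos h3 s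
  constructor
  · calc P s θ ≤ (Real.sqrt 3 ^ s)⁻¹ := by rw [← hpow]; exact hP
      _ ≤ 1/3 := by rw [inv_le_comm₀ (by positivity) (by norm_num)]; nlinarith
  · have h1 : P s θ ≤ (Real.sqrt 3 ^ s)⁻¹ := by rw [← hpow]; exact hP
    have h2 : (Real.sqrt 3 ^ s)⁻¹ ≤ 2/(3*s) := by
      rw [inv_le_comm₀ (by positivity) (by positivity), inv_div]
      linarith
    have hPp : 0 ≤ P s θ := by
      unfold P; positivity
    calc s * P s θ ≤ s * (2/(3*s)) := by
          apply mul_le_mul_of_nonneg_left (le_trans h1 h2) (by linarith)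
      _ = 2/3 := by
          field_simp




set_option maxHeartbeats 1000000 in
lemma sqrt3_pos : (0:ℝ) < Real.sqrt 3 := Real.sqrt_pos.mpr (by norm_num)
lemma sqrt3_sq : Real.sqrt 3 ^ 2 = 3 := Real.sq_sqrt (by norm_num)

/-- the Wronskian identity: for `θ = u + π/3`,
`Fd u · F θ − F u · Fd θ` in expanded form. -/
lemma W_eq (s u : ℝ) (h1 : 0 < u) (h2 : u + π/3 < 2*π) :
    Fd s u * coorbitalF s (u + π/3) - coorbitalF s u * Fd s (u + π/3)
    = Real.sqrt 3/2 * (P s u - 1) * (P s (u + π/3) - 1)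
      - s/2 * (1 + Real.cos u) * P s u * Real.sin (u + π/3) * (P s (u + π/3) - 1)
      + s/2 * (1 + Real.cos (u + π/3)) * P s (u + π/3) * Real.sin u * (P s u - 1) := by
  have hu2 : u < 2*π := by linarith [pi_pos']
  have hθ1 : 0 < u + π/3 := by linarith [pi_pos']
  rw [F_eq (sin_half_pos h1 hu2).le, F_eq (sin_half_pos hθ1 h2).le]
  have e1 := sin_mul_Pd (s := s) h1 hu2
  have e2 := sin_mul_Pd (s := s) hθ1 h2
  have etrig : Real.sin (u + π/3) * Real.cos u - Real.cos (u + π/3) * Real.sin u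
      = Real.sqrt 3 / 2 := by
    have := Real.sin_sub (u + π/3) u
    rw [show u + π/3 - u = π/3 by ring, Real.sin_pi_div_three] at this
    linarith
  unfold Fd
  linear_combination ((P s u - 1) * (P s (u + π/3) - 1)) * etrig
    + (Real.sin (u + π/3) * (P s (u + π/3) - 1)) * e1
    - (Real.sin u * (P s u - 1)) * e2

set_option maxHeartbeats 2000000 in
/-- positivity of the Wronskian on interval 2 : u ∈ (0, π/3). -/
lemma W_pos2 {s u : ℝ} (hs : 2 < s) (h1 : 0 < u) (h2 : u < π/3) :
    0 < Fd s u * coorbitalF s (u + π/3) - coorbitalF s u * Fd s (u + π/3) := by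
  have hθ2 : u + π/3 < 2*π := by linarith [pi_pos']
  rw [W_eq s u h1 hθ2]
  set p := P s u with hp'
  set q := P s (u + π/3) with hq'
  have hp : 1 < p := one_lt_P (by linarith) h1 h2
  have hq : q < 1 := P_lt_one (by linarith) (by linarith) (by linarith [pi_pos'])
  have hq0 : 0 < q := P_pos (sin_half_pos (by linarith [pi_pos']) hθ2)
  have hsθ : Real.sqrt 3/2 ≤ Real.sin (u + π/3) :=
    sin_ge_sqrt3_half (by linarith) (by linarith)
  have ha : 1/2 ≤ Real.cos u := half_le_cos h1.le h2.le
  have hsu : 0 < Real.sin u := sin_pos_on h1 (by linarith [pi_pos'])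
  have hb : -1 ≤ Real.cos (u + π/3) := Real.neg_one_le_cos _
  have h3 := sqrt3_pos
  -- term3 is nonnegative
  have t3 : 0 ≤ s/2 * (1 + Real.cos (u + π/3)) * q * Real.sin u * (p - 1) :=
    mul_nonneg (mul_nonneg (mul_nonneg (mul_nonneg
      (by linarith : (0:ℝ) ≤ s/2) (by linarith : (0:ℝ) ≤ 1 + Real.cos (u + π/3)))
      hq0.le) hsu.le) (by linarith : (0:ℝ) ≤ p - 1)
  -- bracket inequality
  have key : Real.sqrt 3/2 * (p - 1) * (1 - q)
      < s/2 * (1 + Real.cos u) * p * Real.sin (u + π/3) * (1 - q) := by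
    have hq1 : 0 < 1 - q := by linarith
    have step : Real.sqrt 3/2 * (p - 1) < s/2 * (1 + Real.cos u) * p * Real.sin (u + π/3) := by
      have c1 : (3/2 : ℝ) ≤ s/2 * (1 + Real.cos u) := by nlinarith
      have c2 : p * (Real.sqrt 3/2) ≤ p * Real.sin (u + π/3) :=
        mul_le_mul_of_nonneg_left hsθ (by linarith : (0:ℝ) ≤ p)
      have c3 : (3/2) * (p * (Real.sqrt 3/2)) ≤ (s/2 * (1 + Real.cos u)) * (p * Real.sin (u + π/3)) :=
        mul_le_mul c1 c2 (by positivity) (by linarith)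
      have hps : 0 < Real.sqrt 3 * p := by positivity
      nlinarith [c3, hps, h3]
    calc Real.sqrt 3/2 * (p - 1) * (1 - q)
        < (s/2 * (1 + Real.cos u) * p * Real.sin (u + π/3)) * (1 - q) :=
          mul_lt_mul_of_pos_right step hq1
      _ = s/2 * (1 + Real.cos u) * p * Real.sin (u + π/3) * (1 - q) := by ring
  linarith [key, t3]

set_option maxHeartbeats 2000000 in
/-- positivity of the Wronskian on interval 4 : u ∈ (4π/3, 5π/3). -/
lemma W_pos4 {s u : ℝ} (hs : 2 < s) (h1 : 4*π/3 < u) (h2 : u < 5*π/3) :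
    0 < Fd s u * coorbitalF s (u + π/3) - coorbitalF s u * Fd s (u + π/3) := by
  have hθ2 : u + π/3 < 2*π := by linarith
  rw [W_eq s u (by linarith [pi_pos']) hθ2]
  set p := P s u with hp'
  set q := P s (u + π/3) with hq'
  have hp : p < 1 := P_lt_one (by linarith) (by linarith [pi_pos']) h2
  have hp0 : 0 < p := P_pos (sin_half_pos (by linarith [pi_pos']) (by linarith))
  have hq : 1 < q := one_lt_P' (by linarith) (by linarith) hθ2
  -- cos (u+π/3) ≥ 1/2  since 2π - (u+π/3) ∈ [0,π/3]
  have hb : 1/2 ≤ Real.cos (u + π/3) := by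
    have := half_le_cos (x := 2*π - (u + π/3)) (by linarith) (by linarith)
    rwa [Real.cos_two_pi_sub] at this
  -- sin (u+π/3) ≤ 0
  have hsθ : Real.sin (u + π/3) ≤ 0 := by
    have h0 : (0:ℝ) ≤ Real.sin (2*π - (u + π/3)) := by
      rcases eq_or_lt_of_le (show u + π/3 ≤ 2*π by linarith) with h | h
      · rw [h]; simp
      · exact (sin_pos_on (by linarith) (by linarith [pi_pos'])).le
    rw [Real.sin_two_pi_sub] at h0; linarith
  -- sin u ≤ -√3/2
  have hsu : Real.sin u ≤ -(Real.sqrt 3/2) := by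
    have := sin_ge_sqrt3_half (θ := u - π) (by linarith) (by linarith)
    have h' := Real.sin_add_pi (u - π)
    rw [show u - π + π = u by ring] at h'
    linarith
  have ha : -1 ≤ Real.cos u := Real.neg_one_le_cos _
  have h3 := sqrt3_pos
  -- term2 nonneg
  have t2 : 0 ≤ - (s/2 * (1 + Real.cos u) * p * Real.sin (u + π/3) * (q - 1)) := by
    have h1a : (0:ℝ) ≤ 1 + Real.cos u := by linarith
    have := mul_nonneg (mul_nonneg (mul_nonneg (mul_nonneg
      (by linarith : (0:ℝ) ≤ s/2) h1a) hp0.le) (by linarith : (0:ℝ) ≤ -Real.sin (u+π/3)))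
      (by linarith : (0:ℝ) ≤ q - 1)
    nlinarith [this]
  have key : Real.sqrt 3/2 * (q - 1) * (1 - p)
      < s/2 * (1 + Real.cos (u + π/3)) * q * (-Real.sin u) * (1 - p) := by
    have hp1 : 0 < 1 - p := by linarith
    have step : Real.sqrt 3/2 * (q - 1) < s/2 * (1 + Real.cos (u + π/3)) * q * (-Real.sin u) := by
      have c1 : (3/2 : ℝ) ≤ s/2 * (1 + Real.cos (u + π/3)) := by nlinarith
      have c2 : q * (Real.sqrt 3/2) ≤ q * (-Real.sin u) :=
        mul_le_mul_of_nonneg_left (by linarith) (by linarith : (0:ℝ) ≤ q)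
      have c3 : (3/2) * (q * (Real.sqrt 3/2)) ≤ (s/2 * (1 + Real.cos (u + π/3))) * (q * (-Real.sin u)) :=
        mul_le_mul c1 c2 (by positivity) (by linarith)
      have hqs : 0 < Real.sqrt 3 * q := by positivity
      nlinarith [c3, hqs, h3]
    calc Real.sqrt 3/2 * (q - 1) * (1 - p)
        < (s/2 * (1 + Real.cos (u + π/3)) * q * (-Real.sin u)) * (1 - p) :=
          mul_lt_mul_of_pos_right step hp1
      _ = s/2 * (1 + Real.cos (u + π/3)) * q * (-Real.sin u) * (1 - p) := by ring
  have e : s/2 * (1 + Real.cos (u + π/3)) * q * (-Real.sin u) * (1 - p)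
      = s/2 * (1 + Real.cos (u + π/3)) * q * Real.sin u * (p - 1) := by ring
  rw [e] at key
  linarith [key, t2]

set_option maxHeartbeats 2000000 in
/-- positivity of the Wronskian on interval 3 : u ∈ (2π/3, π). -/
lemma W_pos3 {s u : ℝ} (hs : 2 < s) (h1 : 2*π/3 < u) (h2 : u < π) :
    0 < Fd s u * coorbitalF s (u + π/3) - coorbitalF s u * Fd s (u + π/3) := by
  have hθ2 : u + π/3 < 2*π := by linarith [pi_pos']
  rw [W_eq s u (by linarith [pi_pos']) hθ2]
  set p := P s u with hp'
  set q := P s (u + π/3) with hq'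
  have hpsm := P_small (s := s) (θ := u) hs.le (by
    have := sin_ge_sqrt3_half (θ := u/2) (by linarith) (by linarith)
    linarith)
  have hqsm := P_small (s := s) (θ := u + π/3) hs.le (by
    have := sin_ge_sqrt3_half (θ := (u + π/3)/2) (by linarith) (by linarith)
    linarith)
  have hp0 : 0 < p := P_pos (sin_half_pos (by linarith [pi_pos']) (by linarith))
  have hq0 : 0 < q := P_pos (sin_half_pos (by linarith [pi_pos']) hθ2)
  have hp3 : p ≤ 1/3 := hpsm.1
  have hq3 : q ≤ 1/3 := hqsm.1
  have hsp : s * p ≤ 2/3 := hpsm.2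
  have hsq : s * q ≤ 2/3 := hqsm.2
  -- cos u ≤ -1/2 ; cos θ ≤ -1/2
  have ha : Real.cos u ≤ -(1/2) := cos_le_neg_half h1.le h2.le
  have hb : Real.cos (u + π/3) ≤ -(1/2) := by
    have hc := half_le_cos (x := u + π/3 - π) (by linarith) (by linarith)
    have h' := Real.cos_add_pi (u + π/3 - π)
    rw [show u + π/3 - π + π = u + π/3 by ring] at h'
    linarith
  have ha0 : -1 ≤ Real.cos u := Real.neg_one_le_cos _
  have hb0 : -1 ≤ Real.cos (u + π/3) := Real.neg_one_le_cos _
  -- sin u ∈ [0, √3/2]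
  have hsu : Real.sin u ≤ Real.sqrt 3/2 := by
    have := sin_le_sqrt3_half (x := π - u) (by linarith) (by linarith)
    rwa [Real.sin_pi_sub] at this
  have hsu0 : 0 ≤ Real.sin u := (sin_pos_on (by linarith [pi_pos']) h2).le
  -- sin θ ∈ [-√3/2, 0]
  have hsθ : -(Real.sqrt 3/2) ≤ Real.sin (u + π/3) := by
    have h4 := sin_le_sqrt3_half (x := u + π/3 - π) (by linarith) (by linarith)
    have h' := Real.sin_add_pi (u + π/3 - π)
    rw [show u + π/3 - π + π = u + π/3 by ring] at h'
    linarith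
  have hsθ0 : Real.sin (u + π/3) ≤ 0 := by
    have h4 : 0 ≤ Real.sin (u + π/3 - π) :=
      (sin_pos_on (by linarith) (by linarith [pi_pos'])).le
    have h' := Real.sin_add_pi (u + π/3 - π)
    rw [show u + π/3 - π + π = u + π/3 by ring] at h'
    linarith
  have h3 := sqrt3_pos
  have h3sq := sqrt3_sq
  -- |term2| ≤ √3/12
  have t2 : s/2 * (1 + Real.cos u) * p * Real.sin (u + π/3) * (q - 1) ≤ Real.sqrt 3/12 := by
    have e : s/2 * (1 + Real.cos u) * p * Real.sin (u + π/3) * (q - 1)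
        = (s*p) * ((1 + Real.cos u) * ((-Real.sin (u + π/3)) * (1 - q))) / 2 := by ring
    rw [e]
    have b1 : (1 + Real.cos u) * ((-Real.sin (u + π/3)) * (1 - q)) ≤ (1/2) * (Real.sqrt 3/2 * 1) := by
      apply mul_le_mul (by linarith) ?_ ?_ (by norm_num)
      · apply mul_le_mul (by linarith) (by linarith) (by linarith) (by linarith)
      · apply mul_nonneg (by linarith) (by linarith)
    have b2 : (s*p) * ((1 + Real.cos u) * ((-Real.sin (u + π/3)) * (1 - q))) ≤ (2/3) * ((1/2) * (Real.sqrt 3/2 * 1)) := by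
      apply mul_le_mul hsp b1 ?_ (by norm_num)
      · apply mul_nonneg (by linarith) (mul_nonneg (by linarith) (by linarith))
    linarith
  -- |term3| ≤ √3/12
  have t3 : -(s/2 * (1 + Real.cos (u + π/3)) * q * Real.sin u * (p - 1)) ≤ Real.sqrt 3/12 := by
    have e : -(s/2 * (1 + Real.cos (u + π/3)) * q * Real.sin u * (p - 1))
        = (s*q) * ((1 + Real.cos (u + π/3)) * (Real.sin u * (1 - p))) / 2 := by ring
    rw [e]
    have b1 : (1 + Real.cos (u + π/3)) * (Real.sin u * (1 - p)) ≤ (1/2) * (Real.sqrt 3/2 * 1) := by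
      apply mul_le_mul (by linarith) ?_ ?_ (by norm_num)
      · apply mul_le_mul hsu (by linarith) (by linarith) (by linarith)
      · apply mul_nonneg hsu0 (by linarith)
    have b2 : (s*q) * ((1 + Real.cos (u + π/3)) * (Real.sin u * (1 - p))) ≤ (2/3) * ((1/2) * (Real.sqrt 3/2 * 1)) := by
      apply mul_le_mul hsq b1 ?_ (by norm_num)
      · apply mul_nonneg (by linarith) (mul_nonneg hsu0 (by linarith))
    linarith
  -- term1 ≥ 2√3/9
  have t1 : 2 * Real.sqrt 3 / 9 ≤ Real.sqrt 3/2 * (p - 1) * (q - 1) := by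
    have hpq : (4/9 : ℝ) ≤ (1 - p) * (1 - q) := by nlinarith [hp3, hq3, hp0, hq0]
    have h5 := mul_le_mul_of_nonneg_left hpq h3.le
    have e1 : Real.sqrt 3/2 * (p - 1) * (q - 1) = Real.sqrt 3 * ((1 - p) * (1 - q))/2 := by ring
    rw [e1]
    linarith [h5]
  linarith [t1, t2, t3, h3]




/-- closed-form for Fd. -/
lemma Fd_eq {s θ : ℝ} (h1 : 0 < θ) (h2 : θ < 2*π) :
    Fd s θ = P s θ * (Real.cos θ - s/2 * (1 + Real.cos θ)) - Real.cos θ := by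
  unfold Fd
  linear_combination sin_mul_Pd (s := s) h1 h2

/-- F is strictly decreasing on (0, π/3): Fd < 0 there. -/
lemma Fd_neg1 {s θ : ℝ} (hs : 2 < s) (h1 : 0 < θ) (h2 : θ < π/3) : Fd s θ < 0 := by
  rw [Fd_eq h1 (by linarith [pi_pos'])]
  have hP : 1 < P s θ := one_lt_P (by linarith) h1 h2
  have hc : 1/2 ≤ Real.cos θ := half_le_cos h1.le h2.le
  have hc1 : Real.cos θ ≤ 1 := Real.cos_le_one θ
  have hA : Real.cos θ - s/2 * (1 + Real.cos θ) < -1 := by nlinarith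
  have key := mul_lt_mul_of_neg_right hP (show Real.cos θ - s/2 * (1 + Real.cos θ) < 0 by linarith)
  -- key : 1 * A > P * A  (since A < 0) ... direction: a < b → c < 0 → b * c < a * c
  nlinarith [key]
  
/-- derivative of F at a negative point `-x` equals `Fd s x` (F is odd). -/
lemma hasDerivAt_F_neg {s x : ℝ} (h1 : 0 < x) (h2 : x < 2*π) :
    HasDerivAt (coorbitalF s) (Fd s x) (-x) := by
  have h := hasDerivAt_F (s := s) h1 h2
  have hneg : HasDerivAt (fun y : ℝ => -y) (-1 : ℝ) (-x) := by
    exact (hasDerivAt_id (-x)).neg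
  have hcomp : HasDerivAt (fun y : ℝ => coorbitalF s (-y)) (Fd s x * (-1)) (-x) := by
    have := HasDerivAt.comp (-x) (by simpa using h) hneg
    exact this
  have hfinal := hcomp.neg
  have heq : (fun y : ℝ => -coorbitalF s (-y)) = coorbitalF s := by
    funext y; rw [F_odd]; ring
  rw [show (-fun y : ℝ => coorbitalF s (-y) : ℝ → ℝ) = coorbitalF s from heq] at hfinal
  exact hfinal.congr_deriv (by ring : -(Fd s x * -1) = Fd s x)

/-- continuity of F away from singularities. -/
lemma F_contAt {s θ : ℝ} (h : Real.sin (θ/2) ≠ 0) : ContinuousAt (coorbitalF s) θ := by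
  unfold coorbitalF
  apply ContinuousAt.mul Real.continuous_sin.continuousAt
  apply ContinuousAt.sub _ continuousAt_const
  apply ContinuousAt.mul continuousAt_const
  exact (Real.continuousAt_rpow_const _ _ (Or.inl (by simpa using h))).comp
    ((continuous_abs.comp (Real.continuous_sin.comp (continuous_id.div_const 2))).continuousAt)

/-- F blows up to +∞ as θ → 0⁺. -/
lemma tendsto_F_atTop {s : ℝ} (hs : 1 < s) : Tendsto (coorbitalF s) (𝓝[>] (0:ℝ)) atTop := by
  -- F θ = 2^(1-s) cos(θ/2) · sin(θ/2)^(1-s) − sin θ on (0, π)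
  have hmain : Tendsto (fun θ => (2:ℝ)^(1-s) * Real.cos (θ/2) * Real.sin (θ/2) ^ (1-s))
      (𝓝[>] (0:ℝ)) atTop := by
    have htsin : Tendsto (fun θ : ℝ => Real.sin (θ/2)) (𝓝[>] (0:ℝ)) (𝓝[>] (0:ℝ)) := by
      apply tendsto_nhdsWithin_of_tendsto_nhds_of_eventually_within
      · have : Tendsto (fun θ : ℝ => Real.sin (θ/2)) (𝓝 0) (𝓝 0) := by
          have := (Real.continuous_sin.comp (continuous_id.div_const 2)).tendsto 0
          simp at this; exact this
        exact this.mono_left nhdsWithin_le_nhds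
      · filter_upwards [Ioo_mem_nhdsGT_of_mem (show (0:ℝ) ∈ Ico 0 π by
          constructor <;> simp [pi_pos'])] with x hx
        exact sin_half_pos hx.1 (by have := hx.2; linarith [pi_pos'])
    have hrpow : Tendsto (fun t : ℝ => t ^ (1-s)) (𝓝[>] (0:ℝ)) atTop := by
      have h1 : Tendsto (fun t : ℝ => (t⁻¹) ^ (s-1)) (𝓝[>] (0:ℝ)) atTop :=
        (tendsto_rpow_atTop (by linarith)).comp tendsto_inv_nhdsGT_zero
      apply h1.congr'
      filter_upwards [self_mem_nhdsWithin] with t (ht : t ∈ Ioi 0)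
      rw [Real.inv_rpow (le_of_lt ht), ← Real.rpow_neg (le_of_lt ht)]
      ring_nf
    have hconst : Tendsto (fun θ : ℝ => (2:ℝ)^(1-s) * Real.cos (θ/2)) (𝓝[>] (0:ℝ))
        (𝓝 ((2:ℝ)^(1-s))) := by
      have hc : Continuous (fun θ : ℝ => (2:ℝ)^(1-s) * Real.cos (θ/2)) := by
        exact continuous_const.mul (Real.continuous_cos.comp (continuous_id.div_const 2))
      exact (hc.tendsto' 0 _ (by simp)).mono_left nhdsWithin_le_nhds
    exact hconst.pos_mul_atTop (Real.rpow_pos_of_pos two_pos _) (hrpow.comp htsin)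
  have hsub : Tendsto (fun θ : ℝ => -Real.sin θ) (𝓝[>] (0:ℝ)) (𝓝 0) := by
    have : Tendsto (fun θ : ℝ => -Real.sin θ) (𝓝 0) (𝓝 0) := by
      simpa using (Real.continuous_sin.tendsto 0).neg
    exact this.mono_left nhdsWithin_le_nhds
  have hsum := hsub.add_atTop hmain
  apply hsum.congr'
  filter_upwards [Ioo_mem_nhdsGT_of_mem (show (0:ℝ) ∈ Ico 0 π by constructor <;> simp [pi_pos'])]
    with θ hθ
  have hpos := sin_half_pos hθ.1 (by have := hθ.2; linarith [pi_pos'])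
  rw [F_eq hpos.le]
  have hsinθ : Real.sin θ = 2 * Real.sin (θ/2) * Real.cos (θ/2) := by
    rw [← Real.sin_two_mul]; ring_nf
  have h2s : (2:ℝ)^(1-s) = 2 * (2:ℝ)^(-s) := by
    rw [show (1-s) = 1 + (-s) by ring, Real.rpow_add two_pos, Real.rpow_one]
  have hss : Real.sin (θ/2) ^ (1-s) = Real.sin (θ/2) ^ (-s) * Real.sin (θ/2) := by
    rw [show (1-s) = -s + 1 by ring, Real.rpow_add_one hpos.ne']
  unfold P
  rw [hsinθ, h2s, hss]
  ring

/-- F → −∞ as θ → 0⁻. -/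
lemma tendsto_F_atBot_left {s : ℝ} (hs : 1 < s) : Tendsto (coorbitalF s) (𝓝[<] (0:ℝ)) atBot := by
  have hneg : Tendsto (fun x : ℝ => -x) (𝓝[<] (0:ℝ)) (𝓝[>] (0:ℝ)) := by
    apply tendsto_nhdsWithin_of_tendsto_nhds_of_eventually_within
    · simpa using (continuous_neg.tendsto (0:ℝ)).mono_left nhdsWithin_le_nhds
    · filter_upwards [self_mem_nhdsWithin] with x (hx : x ∈ Iio 0)
      simpa using hx
  have h1 := (tendsto_F_atTop (s := s) hs).comp hneg
  have h2 : Tendsto (fun x : ℝ => -((coorbitalF s ∘ fun x => -x) x)) (𝓝[<] (0:ℝ)) atBot :=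
    tendsto_neg_atTop_atBot.comp h1
  apply h2.congr
  intro x
  simp only [Function.comp_apply]
  rw [F_odd]; ring

/-- F → −∞ as θ → 2π⁻. -/
lemma tendsto_F_atBot_2pi {s : ℝ} (hs : 1 < s) :
    Tendsto (coorbitalF s) (𝓝[<] (2*π)) atBot := by
  have htr : Tendsto (fun x : ℝ => x - 2*π) (𝓝[<] (2*π)) (𝓝[<] (0:ℝ)) := by
    apply tendsto_nhdsWithin_of_tendsto_nhds_of_eventually_within
    · have hc : Continuous (fun x : ℝ => x - 2*π) := continuous_id.sub continuous_const
      exact (hc.tendsto' (2*π) 0 (by ring)).mono_left nhdsWithin_le_nhds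
    · filter_upwards [self_mem_nhdsWithin] with x (hx : x ∈ Iio (2*π))
      simpa [sub_lt_iff_lt_add] using (by simpa using hx : x < 2*π)
  have := (tendsto_F_atBot_left (s := s) hs).comp htr
  apply this.congr
  intro x
  simp only [Function.comp_apply]
  have h := F_periodic s (x - 2*π)
  rw [show x - 2*π + 2*π = x by ring] at h
  exact h.symm




/-- If a continuous function has negative derivative at each of its zeros in `(a,b)`,
then it has at most one zero there. -/
lemma zeros_unique {g : ℝ → ℝ} {a b : ℝ}
    (hcont : ContinuousOn g (Ioo a b))
    (hderiv : ∀ x ∈ Ioo a b, g x = 0 → ∃ d, HasDerivAt g d x ∧ d < 0) :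
    ∀ x ∈ Ioo a b, ∀ y ∈ Ioo a b, g x = 0 → g y = 0 → x = y := by
  have main : ∀ x ∈ Ioo a b, ∀ y ∈ Ioo a b, g x = 0 → g y = 0 → x < y → False := by
    intro x hx y hy hgx hgy hxy
    obtain ⟨d, hd, hdneg⟩ := hderiv y hy hgy
    -- find z ∈ (x,y) with g z > 0
    have hslope := hasDerivAt_iff_tendsto_slope.mp hd
    have hmem : y ∈ closure (Ioo x y) := by
      rw [closure_Ioo hxy.ne]; exact ⟨hxy.le, le_refl y⟩
    have hne : (𝓝[Ioo x y] y).NeBot := mem_closure_iff_nhdsWithin_neBot.mp hmem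
    have hsl2 : Tendsto (slope g y) (𝓝[Ioo x y] y) (𝓝 d) :=
      hslope.mono_left (nhdsWithin_mono y (fun t ht => ht.2.ne))
    have hev : ∀ᶠ t in 𝓝[Ioo x y] y, slope g y t < 0 := hsl2.eventually_lt_const hdneg
    obtain ⟨z, hzs, hz⟩ := (hev.and self_mem_nhdsWithin).exists
    have hzy : z - y < 0 := by have := hz.2; linarith
    have hgz : 0 < g z := by
      rw [slope_def_field] at hzs
      rcases div_neg_iff.mp hzs with ⟨h1, h2⟩ | ⟨h1, h2⟩
      · linarith
      · linarith [hgy ▸ h1]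
    -- the set of zeros in [x,z] has a greatest element w
    have hsub : Icc x z ⊆ Ioo a b := fun t ht => ⟨lt_of_lt_of_le hx.1 ht.1,
      lt_of_le_of_lt ht.2 (lt_trans hz.2 hy.2)⟩
    have hcont' : ContinuousOn g (Icc x z) := hcont.mono hsub
    set S : Set ℝ := Icc x z ∩ g ⁻¹' {0} with hS
    have hSclosed : IsClosed S :=
      hcont'.preimage_isClosed_of_isClosed isClosed_Icc isClosed_singleton
    have hScomp : IsCompact S :=
      isCompact_Icc.of_isClosed_subset hSclosed inter_subset_left
    have hSne : S.Nonempty := ⟨x, ⟨le_refl x, le_of_lt hz.1⟩, hgx⟩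
    obtain ⟨w, hwS, hwgr⟩ := hScomp.exists_isGreatest hSne
    have hwz : w < z := lt_of_le_of_ne hwS.1.2 (fun h => by
      have : g z = 0 := h ▸ hwS.2
      linarith)
    have hgw : g w = 0 := hwS.2
    -- g > 0 on (w, z]
    have hpos : ∀ t, w < t → t ≤ z → 0 < g t := by
      intro t hwt htz
      have htIcc : t ∈ Icc x z := ⟨le_trans hwS.1.1 hwt.le, htz⟩
      rcases lt_trichotomy (g t) 0 with h | h | h
      · -- IVT gives a zero in (t, z), contradicting maximality of w
        have hsub2 : Icc t z ⊆ Icc x z := Icc_subset_Icc htIcc.1 (le_refl z)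
        have : (0:ℝ) ∈ Ioo (g t) (g z) := ⟨h, hgz⟩
        obtain ⟨v, hv, hgv⟩ := intermediate_value_Ioo (le_of_lt (lt_of_le_of_ne htz
          (fun he => by rw [he] at h; linarith))) (hcont'.mono hsub2) this
        have hvS : v ∈ S := ⟨⟨le_trans htIcc.1 hv.1.le, hv.2.le⟩, hgv⟩
        have := hwgr hvS
        linarith [hwt, hv.1]
      · -- t would be a zero greater than w
        have htS : t ∈ S := ⟨htIcc, h⟩
        have := hwgr htS
        linarith
      · exact h
    -- derivative at w is negative, but right slopes are positive
    have hwIoo : w ∈ Ioo a b := hsub ⟨hwS.1.1, hwS.1.2⟩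
    obtain ⟨d', hd', hdneg'⟩ := hderiv w hwIoo hgw
    have hslope' := hasDerivAt_iff_tendsto_slope.mp hd'
    have hmem' : w ∈ closure (Ioc w z) := by
      rw [closure_Ioc hwz.ne]; exact ⟨le_refl w, hwz.le⟩
    have hne' : (𝓝[Ioc w z] w).NeBot := mem_closure_iff_nhdsWithin_neBot.mp hmem'
    have hsl2' : Tendsto (slope g w) (𝓝[Ioc w z] w) (𝓝 d') :=
      hslope'.mono_left (nhdsWithin_mono w (fun t ht => ht.1.ne'))
    have hev' : ∀ᶠ t in 𝓝[Ioc w z] w, 0 ≤ slope g w t := by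
      filter_upwards [self_mem_nhdsWithin] with t ht
      rw [slope_def_field, hgw, sub_zero]
      exact div_nonneg (hpos t ht.1 ht.2).le (by linarith [ht.1])
    have : 0 ≤ d' := ge_of_tendsto hsl2' hev'
    linarith
  intro x hx y hy hgx hgy
  rcases lt_trichotomy x y with h | h | h
  · exact absurd (main x hx y hy hgx hgy h) not_false
  · exact h
  · exact absurd (main y hy x hx hgy hgx h) not_false




end Coorbital


open Coorbital Filter Topology

set_option maxHeartbeats 1600000 in
/-- Fix `s > 2` and `m₁ ∈ (0,1)`, and let
`g(θ) = m₁ f_s(θ) + (1−m₁) f_s(θ − π/3)`.  Then `g` has exactly one zero in each of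
the open intervals `(0, π/3)`, `(π/3, π)`, `(π, 4π/3)` and `(4π/3, 2π)`, and
`g(π) ≠ 0`, `g(4π/3) ≠ 0`; hence `g` has exactly four zeros in `(0, 2π) \ {π/3}`. -/
theorem one_plus_two_plus_one_lagrange_case (s m₁ : ℝ) (hs : 2 < s)
    (hm₁ : m₁ ∈ Set.Ioo (0 : ℝ) 1) (g : ℝ → ℝ)
    (hg : g = fun θ => m₁ * coorbitalF s θ + (1 - m₁) * coorbitalF s (θ - π / 3)) :
    (∃! θ, θ ∈ Set.Ioo 0 (π / 3) ∧ g θ = 0) ∧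
    (∃! θ, θ ∈ Set.Ioo (π / 3) π ∧ g θ = 0) ∧
    (∃! θ, θ ∈ Set.Ioo π (4 * π / 3) ∧ g θ = 0) ∧
    (∃! θ, θ ∈ Set.Ioo (4 * π / 3) (2 * π) ∧ g θ = 0) ∧
    g π ≠ 0 ∧ g (4 * π / 3) ≠ 0 ∧
    {θ : ℝ | θ ∈ Set.Ioo 0 (2 * π) ∧ θ ≠ π / 3 ∧ g θ = 0}.ncard = 4 := by
  have hπ : (0:ℝ) < π := pi_pos'
  obtain ⟨hm0, hm1⟩ := hm₁
  have hm1' : (0:ℝ) < 1 - m₁ := by linarith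
  have hs0 : (0:ℝ) < s := by linarith
  have hs1 : (1:ℝ) < s := by linarith
  have gval : ∀ θ, g θ = m₁ * coorbitalF s θ + (1 - m₁) * coorbitalF s (θ - π/3) := by
    intro θ; rw [hg]
  -- ### continuity
  have hne : ∀ x : ℝ, 0 < x → x < 2*π → Real.sin (x/2) ≠ 0 :=
    fun x a b => (sin_half_pos a b).ne'
  have hne' : ∀ x : ℝ, -(2*π) < x → x < 0 → Real.sin (x/2) ≠ 0 := by
    intro x a b
    have h := sin_half_pos (show 0 < -x by linarith) (by linarith)
    rw [show -x/2 = -(x/2) by ring, Real.sin_neg] at h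
    intro hc; rw [hc] at h; norm_num at h
  have hcontAt : ∀ x : ℝ, Real.sin (x/2) ≠ 0 → Real.sin ((x - π/3)/2) ≠ 0 →
      ContinuousAt g x := by
    intro x h1 h2
    rw [hg]
    have hsh : ContinuousAt (fun θ : ℝ => θ - π/3) x := (continuous_sub_right (π/3)).continuousAt
    have hc2 : ContinuousAt (fun θ : ℝ => coorbitalF s (θ - π/3)) x :=
      ContinuousAt.comp (g := coorbitalF s) (f := fun θ : ℝ => θ - π/3) (F_contAt h2) hsh
    exact (continuousAt_const.mul (F_contAt h1)).add (continuousAt_const.mul hc2)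
  have hcont : ∀ x : ℝ, 0 < x → x < 2*π → x ≠ π/3 → ContinuousAt g x := by
    intro x a b c
    apply hcontAt x (hne x a b)
    rcases lt_or_gt_of_ne c with h | h
    · exact hne' _ (by linarith) (by linarith)
    · exact hne _ (by linarith) (by linarith)
  -- ### derivatives
  have hDg : ∀ x : ℝ, π/3 < x → x < 2*π →
      HasDerivAt g (m₁ * Fd s x + (1 - m₁) * Fd s (x - π/3)) x := by
    intro x a b
    rw [hg]
    have h1 := hasDerivAt_F (s := s) (show 0 < x by linarith) b
    have hi : HasDerivAt (fun y : ℝ => y - π/3) 1 x := (hasDerivAt_id x).sub_const _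
    have h2 := hasDerivAt_F (s := s) (show 0 < x - π/3 by linarith) (by linarith)
    have h3 : HasDerivAt (fun y : ℝ => coorbitalF s (y - π/3)) (Fd s (x - π/3)) x := by
      have := HasDerivAt.comp x h2 hi; exact this.congr_deriv (mul_one _)
    exact (h1.const_mul m₁).add (h3.const_mul (1 - m₁))
  have hDg' : ∀ x : ℝ, 0 < x → x < π/3 →
      HasDerivAt g (m₁ * Fd s x + (1 - m₁) * Fd s (π/3 - x)) x := by
    intro x a b
    rw [hg]
    have h1 := hasDerivAt_F (s := s) a (by linarith)
    have hi : HasDerivAt (fun y : ℝ => y - π/3) 1 x := (hasDerivAt_id x).sub_const _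
    have h2 : HasDerivAt (coorbitalF s) (Fd s (π/3 - x)) (x - π/3) := by
      have := hasDerivAt_F_neg (s := s) (show 0 < π/3 - x by linarith) (by linarith)
      rw [show -(π/3 - x) = x - π/3 by ring] at this; exact this
    have h3 : HasDerivAt (fun y : ℝ => coorbitalF s (y - π/3)) (Fd s (π/3 - x)) x := by
      have := HasDerivAt.comp x h2 hi; exact this.congr_deriv (mul_one _)
    exact (h1.const_mul m₁).add (h3.const_mul (1 - m₁))
  -- ### special values of g
  have gpi : g π < 0 := by
    rw [gval, F_pi]
    have h2 : coorbitalF s (π - π/3) < 0 := F_neg2 hs0 (by linarith) (by linarith)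
    nlinarith [mul_neg_of_pos_of_neg hm1' h2]
  have g2pi3 : g (2*π/3) < 0 := by
    rw [gval, show 2*π/3 - π/3 = π/3 by ring, F_pi3]
    have h1 : coorbitalF s (2*π/3) < 0 := F_neg2 hs0 (by linarith) (by linarith)
    nlinarith [mul_neg_of_pos_of_neg hm0 h1]
  have g4pi3 : 0 < g (4*π/3) := by
    rw [gval, show 4*π/3 - π/3 = π by ring, F_pi]
    have h1 : 0 < coorbitalF s (4*π/3) := F_pos3 hs0 (by linarith) (by linarith)
    nlinarith [mul_pos hm0 h1]
  have g5pi3 : 0 < g (5*π/3) := by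
    rw [gval, F_5pi3, show 5*π/3 - π/3 = 4*π/3 by ring]
    have h1 : 0 < coorbitalF s (4*π/3) := F_pos3 hs0 (by linarith) (by linarith)
    nlinarith [mul_pos hm1' h1]
  -- ### confinement of zeros
  have hconf2 : ∀ x : ℝ, 2*π/3 ≤ x → x < π → g x < 0 := by
    intro x a b
    rw [gval]
    have h1 : coorbitalF s x < 0 := F_neg2 hs0 (by linarith) b
    have h2 : coorbitalF s (x - π/3) ≤ 0 := by
      rcases eq_or_lt_of_le a with h | h
      · rw [← h, show 2*π/3 - π/3 = π/3 by ring, F_pi3]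
      · exact (F_neg2 hs0 (by linarith) (by linarith)).le
    nlinarith [mul_neg_of_pos_of_neg hm0 h1, mul_nonneg hm1'.le (neg_nonneg.mpr h2)]
  have hconf4 : ∀ x : ℝ, 4*π/3 < x → x ≤ 5*π/3 → 0 < g x := by
    intro x a b
    rw [gval]
    have h2 : 0 < coorbitalF s (x - π/3) := F_pos3 hs0 (by linarith) (by linarith)
    have h1 : 0 ≤ coorbitalF s x := by
      rcases eq_or_lt_of_le b with h | h
      · rw [h, F_5pi3]
      · exact (F_pos3 hs0 (by linarith) h).le
    nlinarith [mul_pos hm1' h2, mul_nonneg hm0.le h1]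
  -- ### derivative negativity at zeros (intervals 1,2,4) and positivity (3)
  have hdneg1 : ∀ x ∈ Set.Ioo (0:ℝ) (π/3), g x = 0 → ∃ d, HasDerivAt g d x ∧ d < 0 := by
    intro x hx _
    refine ⟨_, hDg' x hx.1 hx.2, ?_⟩
    have h1 := Fd_neg1 (s := s) hs hx.1 hx.2
    have h2 := Fd_neg1 (s := s) hs (show 0 < π/3 - x by linarith [hx.2]) (by linarith [hx.1])
    nlinarith [mul_neg_of_pos_of_neg hm0 h1, mul_neg_of_pos_of_neg hm1' h2]
  have hdneg2 : ∀ x ∈ Set.Ioo (π/3) π, g x = 0 → ∃ d, HasDerivAt g d x ∧ d < 0 := by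
    intro x hx hgx
    rcases lt_or_ge x (2*π/3) with hx2 | hx2
    · refine ⟨_, hDg x hx.1 (by linarith [hx.2]), ?_⟩
      have hu1 : 0 < x - π/3 := by linarith [hx.1]
      have hu2 : x - π/3 < π/3 := by linarith
      have hW := W_pos2 (s := s) hs hu1 hu2
      rw [show x - π/3 + π/3 = x by ring] at hW
      have hFu : 0 < coorbitalF s (x - π/3) := F_pos1 hs0 hu1 hu2
      have hzero : m₁ * coorbitalF s x + (1 - m₁) * coorbitalF s (x - π/3) = 0 := by
        rw [← gval]; exact hgx
      have e : (m₁ * Fd s x + (1 - m₁) * Fd s (x - π/3)) * coorbitalF s (x - π/3)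
          = -m₁ * (Fd s (x - π/3) * coorbitalF s x
              - coorbitalF s (x - π/3) * Fd s x) := by
        linear_combination (Fd s (x - π/3)) * hzero
      by_contra hnd
      push_neg at hnd
      nlinarith [mul_nonneg hnd hFu.le, mul_pos hm0 hW]
    · exact absurd hgx (by have := hconf2 x hx2 hx.2; linarith)
  have hdneg4 : ∀ x ∈ Set.Ioo (4*π/3) (2*π), g x = 0 → ∃ d, HasDerivAt g d x ∧ d < 0 := by
    intro x hx hgx
    rcases le_or_gt x (5*π/3) with hx2 | hx2
    · exact absurd hgx (by have := hconf4 x hx.1 hx2; linarith)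
    · refine ⟨_, hDg x (by linarith [hx.1]) hx.2, ?_⟩
      have hu1 : 4*π/3 < x - π/3 := by linarith
      have hu2 : x - π/3 < 5*π/3 := by linarith [hx.2]
      have hW := W_pos4 (s := s) hs hu1 hu2
      rw [show x - π/3 + π/3 = x by ring] at hW
      have hFu : 0 < coorbitalF s (x - π/3) := F_pos3 hs0 (by linarith) hu2
      have hzero : m₁ * coorbitalF s x + (1 - m₁) * coorbitalF s (x - π/3) = 0 := by
        rw [← gval]; exact hgx
      have e : (m₁ * Fd s x + (1 - m₁) * Fd s (x - π/3)) * coorbitalF s (x - π/3)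
          = -m₁ * (Fd s (x - π/3) * coorbitalF s x
              - coorbitalF s (x - π/3) * Fd s x) := by
        linear_combination (Fd s (x - π/3)) * hzero
      by_contra hnd
      push_neg at hnd
      nlinarith [mul_nonneg hnd hFu.le, mul_pos hm0 hW]
  have hdpos3 : ∀ x ∈ Set.Ioo π (4*π/3), g x = 0 →
      ∃ d, HasDerivAt (fun t => -g t) d x ∧ d < 0 := by
    intro x hx hgx
    have hD := hDg x (by linarith [hx.1]) (by linarith [hx.2])
    refine ⟨_, hD.neg, ?_⟩
    have hu1 : 2*π/3 < x - π/3 := by linarith [hx.1]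
    have hu2 : x - π/3 < π := by linarith [hx.2]
    have hW := W_pos3 (s := s) hs hu1 hu2
    rw [show x - π/3 + π/3 = x by ring] at hW
    have hFx : 0 < coorbitalF s x := F_pos3 hs0 hx.1 (by linarith [hx.2])
    have hzero : m₁ * coorbitalF s x + (1 - m₁) * coorbitalF s (x - π/3) = 0 := by
      rw [← gval]; exact hgx
    have e : (m₁ * Fd s x + (1 - m₁) * Fd s (x - π/3)) * coorbitalF s x
        = (1 - m₁) * (Fd s (x - π/3) * coorbitalF s x
            - coorbitalF s (x - π/3) * Fd s x) := by
      linear_combination (Fd s x) * hzero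
    have hd0 : 0 < m₁ * Fd s x + (1 - m₁) * Fd s (x - π/3) := by
      by_contra hnd
      push_neg at hnd
      nlinarith [mul_nonpos_of_nonpos_of_nonneg hnd hFx.le, mul_pos hm1' hW]
    linarith
  -- ### limits
  have hlim0 : Tendsto g (𝓝[>] (0:ℝ)) atTop := by
    rw [hg]
    have hfirst : Tendsto (fun θ : ℝ => m₁ * coorbitalF s θ) (𝓝[>] (0:ℝ)) atTop :=
      Tendsto.const_mul_atTop hm0 (tendsto_F_atTop hs1)
    have hs2 : Real.sin (((0:ℝ) - π/3)/2) ≠ 0 := by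
      rw [show ((0:ℝ) - π/3)/2 = -(π/6) by ring, Real.sin_neg, Real.sin_pi_div_six]; norm_num
    have hsh : ContinuousAt (fun θ : ℝ => θ - π/3) (0:ℝ) :=
      (continuous_sub_right (π/3)).continuousAt
    have hFc : ContinuousAt (fun θ : ℝ => (1 - m₁) * coorbitalF s (θ - π/3)) 0 :=
      continuousAt_const.mul (ContinuousAt.comp (g := coorbitalF s)
        (f := fun θ : ℝ => θ - π/3) (F_contAt hs2) hsh)
    have h2 := hFc.continuousWithinAt (s := Ioi (0:ℝ))
    exact ((h2.add_atTop hfirst).congr (fun x => by ring))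
  have hlim13L : Tendsto g (𝓝[<] (π/3)) atBot := by
    rw [hg]
    have htr : Tendsto (fun θ : ℝ => θ - π/3) (𝓝[<] (π/3)) (𝓝[<] (0:ℝ)) := by
      apply tendsto_nhdsWithin_of_tendsto_nhds_of_eventually_within
      · exact ((continuous_sub_right (π/3)).tendsto' (π/3) 0 (by ring)).mono_left
          nhdsWithin_le_nhds
      · filter_upwards [self_mem_nhdsWithin] with t ht
        simp only [Set.mem_Iio] at ht ⊢; linarith
    have hsecond : Tendsto (fun θ : ℝ => (1 - m₁) * coorbitalF s (θ - π/3)) (𝓝[<] (π/3)) atBot :=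
      (tendsto_const_mul_atBot_of_pos hm1').mpr ((tendsto_F_atBot_left hs1).comp htr)
    have hs2 : Real.sin ((π/3)/2) ≠ 0 := by
      rw [show (π/3)/2 = π/6 by ring, Real.sin_pi_div_six]; norm_num
    have hfc : ContinuousAt (fun θ : ℝ => m₁ * coorbitalF s θ) (π/3) :=
      continuousAt_const.mul (F_contAt hs2)
    exact (hfc.continuousWithinAt).add_atBot hsecond
  have hlim13R : Tendsto g (𝓝[>] (π/3)) atTop := by
    rw [hg]
    have htr : Tendsto (fun θ : ℝ => θ - π/3) (𝓝[>] (π/3)) (𝓝[>] (0:ℝ)) := by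
      apply tendsto_nhdsWithin_of_tendsto_nhds_of_eventually_within
      · exact ((continuous_sub_right (π/3)).tendsto' (π/3) 0 (by ring)).mono_left
          nhdsWithin_le_nhds
      · filter_upwards [self_mem_nhdsWithin] with t ht
        simp only [Set.mem_Ioi] at ht ⊢; linarith
    have hsecond : Tendsto (fun θ : ℝ => (1 - m₁) * coorbitalF s (θ - π/3)) (𝓝[>] (π/3)) atTop :=
      Tendsto.const_mul_atTop hm1' ((tendsto_F_atTop hs1).comp htr)
    have hs2 : Real.sin ((π/3)/2) ≠ 0 := by
      rw [show (π/3)/2 = π/6 by ring, Real.sin_pi_div_six]; norm_num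
    have hfc : ContinuousAt (fun θ : ℝ => m₁ * coorbitalF s θ) (π/3) :=
      continuousAt_const.mul (F_contAt hs2)
    exact (hfc.continuousWithinAt).add_atTop hsecond
  have hlim2pi : Tendsto g (𝓝[<] (2*π)) atBot := by
    rw [hg]
    have hfirst : Tendsto (fun θ : ℝ => m₁ * coorbitalF s θ) (𝓝[<] (2*π)) atBot :=
      (tendsto_const_mul_atBot_of_pos hm0).mpr (tendsto_F_atBot_2pi hs1)
    have hs2 : Real.sin ((2*π - π/3)/2) ≠ 0 := by
      rw [show (2*π - π/3)/2 = π - π/6 by ring, Real.sin_pi_sub, Real.sin_pi_div_six]; norm_num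
    have hsh : ContinuousAt (fun θ : ℝ => θ - π/3) (2*π) :=
      (continuous_sub_right (π/3)).continuousAt
    have hFc : ContinuousAt (fun θ : ℝ => (1 - m₁) * coorbitalF s (θ - π/3)) (2*π) :=
      continuousAt_const.mul (ContinuousAt.comp (g := coorbitalF s)
        (f := fun θ : ℝ => θ - π/3) (F_contAt hs2) hsh)
    have h2 := hFc.continuousWithinAt (s := Iio (2*π))
    exact ((h2.add_atBot hfirst).congr (fun x => by ring))
  -- ### interval 1 : existence and uniqueness
  obtain ⟨a₁, ha₁gt, ha₁mem⟩ : ∃ t, 0 < g t ∧ t ∈ Ioo (0:ℝ) (π/3) :=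
    ((hlim0.eventually (eventually_gt_atTop 0)).and
      (eventually_of_mem (Ioo_mem_nhdsGT_of_mem ⟨le_refl (0:ℝ), by linarith⟩) fun t ht => ht)).exists
  obtain ⟨b₁, hb₁lt, hb₁mem⟩ : ∃ t, g t < 0 ∧ t ∈ Ioo a₁ (π/3) :=
    ((hlim13L.eventually (eventually_lt_atBot 0)).and
      (eventually_of_mem (Ioo_mem_nhdsLT_of_mem ⟨ha₁mem.2, le_refl (π/3)⟩) fun t ht => ht)).exists
  have hcIcc1 : ContinuousOn g (Icc a₁ b₁) := fun t ht =>
    (hcont t (lt_of_lt_of_le ha₁mem.1 ht.1) (by nlinarith [hb₁mem.2, ht.2])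
      (ne_of_lt (lt_of_le_of_lt ht.2 hb₁mem.2))).continuousWithinAt
  obtain ⟨θ₁, hθ₁mem, hθ₁z⟩ := intermediate_value_Ioo' (le_of_lt hb₁mem.1) hcIcc1
    (Set.mem_Ioo.mpr ⟨hb₁lt, ha₁gt⟩)
  have hθ₁Ioo : θ₁ ∈ Ioo (0:ℝ) (π/3) :=
    ⟨lt_trans ha₁mem.1 hθ₁mem.1, lt_trans hθ₁mem.2 hb₁mem.2⟩
  have hcOn1 : ContinuousOn g (Ioo (0:ℝ) (π/3)) := fun t ht =>
    (hcont t ht.1 (by linarith [ht.2]) (ne_of_lt ht.2)).continuousWithinAt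
  have huniq1 := zeros_unique hcOn1 hdneg1
  have E1 : ∃! θ, θ ∈ Set.Ioo (0:ℝ) (π/3) ∧ g θ = 0 :=
    ⟨θ₁, ⟨hθ₁Ioo, hθ₁z⟩, fun y hy => huniq1 y hy.1 θ₁ hθ₁Ioo hy.2 hθ₁z⟩
  -- ### interval 2
  obtain ⟨a₂, ha₂gt, ha₂mem⟩ : ∃ t, 0 < g t ∧ t ∈ Ioo (π/3) (2*π/3) :=
    ((hlim13R.eventually (eventually_gt_atTop 0)).and
      (eventually_of_mem (Ioo_mem_nhdsGT_of_mem ⟨le_refl (π/3), by linarith⟩) fun t ht => ht)).exists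
  have hcIcc2 : ContinuousOn g (Icc a₂ (2*π/3)) := fun t ht =>
    (hcont t (by linarith [lt_of_lt_of_le ha₂mem.1 ht.1]) (by nlinarith [ht.2])
      (ne_of_gt (lt_of_lt_of_le ha₂mem.1 ht.1))).continuousWithinAt
  obtain ⟨θ₂, hθ₂mem, hθ₂z⟩ := intermediate_value_Ioo' (le_of_lt ha₂mem.2) hcIcc2
    (Set.mem_Ioo.mpr ⟨g2pi3, ha₂gt⟩)
  have hθ₂Ioo : θ₂ ∈ Ioo (π/3) π :=
    ⟨lt_trans ha₂mem.1 hθ₂mem.1, lt_trans hθ₂mem.2 (by linarith)⟩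
  have hcOn2 : ContinuousOn g (Ioo (π/3) π) := fun t ht =>
    (hcont t (by linarith [ht.1]) (by linarith [ht.2]) (ne_of_gt ht.1)).continuousWithinAt
  have huniq2 := zeros_unique hcOn2 hdneg2
  have E2 : ∃! θ, θ ∈ Set.Ioo (π/3) π ∧ g θ = 0 :=
    ⟨θ₂, ⟨hθ₂Ioo, hθ₂z⟩, fun y hy => huniq2 y hy.1 θ₂ hθ₂Ioo hy.2 hθ₂z⟩
  -- ### interval 3
  have hcIcc3 : ContinuousOn g (Icc π (4*π/3)) := fun t ht =>
    (hcont t (by linarith [ht.1]) (by linarith [ht.2]) (by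
      have : π/3 < t := by linarith [ht.1]
      exact ne_of_gt this)).continuousWithinAt
  obtain ⟨θ₃, hθ₃mem, hθ₃z⟩ := intermediate_value_Ioo (by linarith : π ≤ 4*π/3) hcIcc3
    (Set.mem_Ioo.mpr ⟨gpi, g4pi3⟩)
  have hθ₃Ioo : θ₃ ∈ Ioo π (4*π/3) := hθ₃mem
  have hcOn3 : ContinuousOn g (Ioo π (4*π/3)) := fun t ht =>
    (hcont t (by linarith [ht.1]) (by linarith [ht.2]) (ne_of_gt (by linarith [ht.1]))).continuousWithinAt
  have hd3' : ∀ x ∈ Set.Ioo π (4*π/3), (fun t => -g t) x = 0 →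
      ∃ d, HasDerivAt (fun t => -g t) d x ∧ d < 0 := by
    intro x hx hz
    exact hdpos3 x hx (by simpa [neg_eq_zero] using hz)
  have huniq3 := zeros_unique hcOn3.neg hd3'
  have E3 : ∃! θ, θ ∈ Set.Ioo π (4*π/3) ∧ g θ = 0 :=
    ⟨θ₃, ⟨hθ₃Ioo, hθ₃z⟩, fun y hy =>
      huniq3 y hy.1 θ₃ hθ₃Ioo (by simp [hy.2]) (by simp [hθ₃z])⟩
  -- ### interval 4
  obtain ⟨b₄, hb₄lt, hb₄mem⟩ : ∃ t, g t < 0 ∧ t ∈ Ioo (5*π/3) (2*π) :=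
    ((hlim2pi.eventually (eventually_lt_atBot 0)).and
      (eventually_of_mem (Ioo_mem_nhdsLT_of_mem ⟨by linarith, le_refl (2*π)⟩) fun t ht => ht)).exists
  have hcIcc4 : ContinuousOn g (Icc (5*π/3) b₄) := fun t ht =>
    (hcont t (by linarith [ht.1]) (by linarith [lt_of_le_of_lt ht.2 hb₄mem.2])
      (ne_of_gt (by linarith [ht.1]))).continuousWithinAt
  obtain ⟨θ₄, hθ₄mem, hθ₄z⟩ := intermediate_value_Ioo' (le_of_lt hb₄mem.1) hcIcc4
    (Set.mem_Ioo.mpr ⟨hb₄lt, g5pi3⟩)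
  have hθ₄Ioo : θ₄ ∈ Ioo (4*π/3) (2*π) :=
    ⟨by linarith [hθ₄mem.1], lt_trans hθ₄mem.2 hb₄mem.2⟩
  have hcOn4 : ContinuousOn g (Ioo (4*π/3) (2*π)) := fun t ht =>
    (hcont t (by linarith [ht.1]) ht.2 (ne_of_gt (by linarith [ht.1]))).continuousWithinAt
  have huniq4 := zeros_unique hcOn4 hdneg4
  have E4 : ∃! θ, θ ∈ Set.Ioo (4*π/3) (2*π) ∧ g θ = 0 :=
    ⟨θ₄, ⟨hθ₄Ioo, hθ₄z⟩, fun y hy => huniq4 y hy.1 θ₄ hθ₄Ioo hy.2 hθ₄z⟩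
  -- ### the zero set has exactly four elements
  have hZ : {θ : ℝ | θ ∈ Set.Ioo 0 (2*π) ∧ θ ≠ π/3 ∧ g θ = 0} = {θ₁, θ₂, θ₃, θ₄} := by
    ext θ
    simp only [Set.mem_setOf_eq, Set.mem_insert_iff, Set.mem_singleton_iff]
    constructor
    · rintro ⟨hmem, hne3, hz⟩
      rcases lt_trichotomy θ (π/3) with h | h | h
      · exact Or.inl (huniq1 θ ⟨hmem.1, h⟩ θ₁ hθ₁Ioo hz hθ₁z)
      · exact absurd h hne3
      · rcases lt_trichotomy θ π with h2 | h2 | h2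
        · exact Or.inr (Or.inl (huniq2 θ ⟨h, h2⟩ θ₂ hθ₂Ioo hz hθ₂z))
        · exact absurd (h2 ▸ hz) (ne_of_lt gpi)
        · rcases lt_trichotomy θ (4*π/3) with h3 | h3 | h3
          · exact Or.inr (Or.inr (Or.inl (huniq3 θ ⟨h2, h3⟩ θ₃ hθ₃Ioo
              (by simp [hz]) (by simp [hθ₃z]))))
          · exact absurd (h3 ▸ hz) (ne_of_gt g4pi3)
          · exact Or.inr (Or.inr (Or.inr (huniq4 θ ⟨h3, hmem.2⟩ θ₄ hθ₄Ioo hz hθ₄z)))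
    · rintro (rfl | rfl | rfl | rfl)
      · exact ⟨⟨hθ₁Ioo.1, by linarith [hθ₁Ioo.2]⟩, ne_of_lt hθ₁Ioo.2, hθ₁z⟩
      · exact ⟨⟨by linarith [hθ₂Ioo.1], by linarith [hθ₂Ioo.2]⟩, ne_of_gt hθ₂Ioo.1, hθ₂z⟩
      · exact ⟨⟨by linarith [hθ₃Ioo.1], by linarith [hθ₃Ioo.2]⟩,
          ne_of_gt (by linarith [hθ₃Ioo.1]), hθ₃z⟩
      · exact ⟨⟨by linarith [hθ₄Ioo.1], hθ₄Ioo.2⟩, ne_of_gt (by linarith [hθ₄Ioo.1]), hθ₄z⟩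
  have d12 : θ₁ ≠ θ₂ := ne_of_lt (by linarith [hθ₁Ioo.2, hθ₂Ioo.1])
  have d13 : θ₁ ≠ θ₃ := ne_of_lt (by linarith [hθ₁Ioo.2, hθ₃Ioo.1])
  have d14 : θ₁ ≠ θ₄ := ne_of_lt (by linarith [hθ₁Ioo.2, hθ₄Ioo.1])
  have d23 : θ₂ ≠ θ₃ := ne_of_lt (by linarith [hθ₂Ioo.2, hθ₃Ioo.1])
  have d24 : θ₂ ≠ θ₄ := ne_of_lt (by linarith [hθ₂Ioo.2, hθ₄Ioo.1])
  have d34 : θ₃ ≠ θ₄ := ne_of_lt (by linarith [hθ₃Ioo.2, hθ₄Ioo.1])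
  have hncard : {θ : ℝ | θ ∈ Set.Ioo 0 (2*π) ∧ θ ≠ π/3 ∧ g θ = 0}.ncard = 4 := by
    rw [hZ]
    rw [Set.ncard_insert_of_notMem (by simp [d12, d13, d14]),
      Set.ncard_insert_of_notMem (by simp [d23, d24]), Set.ncard_pair d34]
  exact ⟨E1, E2, E3, E4, ne_of_lt gpi, ne_of_gt g4pi3, hncard⟩
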